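/- Let W ⊆ S^d V be a linear series of homogeneous forms of degree d (V an n-dimensional ℂ-vector space). The apolar ideal W^⊥ has a minimal generator of degree d + 1 if and only if there exists a nonzero homogeneous form G of degree d + 1 with T_1 ⌟ G ⊆ W, i.e. α ⌟ G ∈ W for every linear form α ∈ T_1 (the first prolongation of W is nonzero). -/

import Mathlib

/-!
Apolarity setup.  `S = ℂ[x_1,…,x_n]` and its dual ring `T = ℂ[α_1,…,α_n]` are both
realized as `MvPolynomial (Fin n) ℂ`; the apolarity action `Θ ⌟ F` (`contract Θ F`)
lets `α_i` act as the partial differentiation operator `∂/∂x_i`.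
-/

open MvPolynomial

noncomputable section Apolarity

/-- Partial derivatives on `ℂ[x_1,…,x_n]` commute. -/
lemma pderiv_pderiv_comm (n : ℕ) (i j : Fin n) (f : MvPolynomial (Fin n) ℂ) :
    pderiv i (pderiv j f) = pderiv j (pderiv i f) := by
  induction f using MvPolynomial.induction_on with
  | C a => simp
  | add p q hp hq => simp [hp, hq]
  | mul_X p k hp =>
    rcases eq_or_ne i k with rfl | hik
    · rcases eq_or_ne j i with rfl | hjk
      · rfl
      · simp only [pderiv_mul, pderiv_X_self, pderiv_X_of_ne hjk, pderiv_X_of_ne hjk.symm,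
          map_add, map_zero, map_one, Derivation.map_one_eq_zero, mul_one, mul_zero,
          add_zero, zero_add, hp]
    · rcases eq_or_ne j k with rfl | hjk
      · simp only [pderiv_mul, pderiv_X_self, pderiv_X_of_ne hik, pderiv_X_of_ne hik.symm,
          map_add, map_zero, map_one, Derivation.map_one_eq_zero, mul_one, mul_zero,
          add_zero, zero_add, hp]
      · simp only [pderiv_mul, pderiv_X_of_ne hik.symm, pderiv_X_of_ne hjk.symm, map_add,
          map_zero, mul_zero, add_zero, zero_add, hp]

variable (n : ℕ)

/-- The endomorphism `∂/∂x_i` of `S = ℂ[x_1,…,x_n]`. -/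
def derOp (i : Fin n) : Module.End ℂ (MvPolynomial (Fin n) ℂ) :=
  (pderiv i).toLinearMap

lemma derOp_commute (i j : Fin n) : Commute (derOp n i) (derOp n j) :=
  LinearMap.ext fun f => pderiv_pderiv_comm n i j f

/-- The commuting product of the operators `(∂/∂x_i)^(m i)`. -/
def piDiffHom : (Fin n → Multiplicative ℕ) →* Module.End ℂ (MvPolynomial (Fin n) ℂ) :=
  MonoidHom.noncommPiCoprod (fun i : Fin n => powersHom _ (derOp n i))
    (fun i j _ x y => ((derOp_commute n i j).pow_pow x y))

/-- The differential operator `∏ i, (∂/∂x_i)^(m i)` attached to an exponent vector `m`. -/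
def diffMonoidHom : Multiplicative (Fin n →₀ ℕ) →* Module.End ℂ (MvPolynomial (Fin n) ℂ) :=
  (piDiffHom n).comp
    (AddMonoidHom.toMultiplicative
      (Finsupp.coeFnAddHom : (Fin n →₀ ℕ) →+ (Fin n → ℕ)))

/-- The apolarity action of the dual ring `T = ℂ[α_1,…,α_n]` on `S = ℂ[x_1,…,x_n]`, as an
algebra homomorphism to differential operators: `α_i` acts as `∂/∂x_i`. -/
def apolarAlgHom :
    MvPolynomial (Fin n) ℂ →ₐ[ℂ] Module.End ℂ (MvPolynomial (Fin n) ℂ) :=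
  AddMonoidAlgebra.lift ℂ _ (Fin n →₀ ℕ) (diffMonoidHom n)

variable {n}

/-- The apolarity action `Θ ⌟ F`: apply to `F` the differential operator obtained from `Θ`
by substituting `∂/∂x_i` for the `i`-th (dual) variable. -/
def contract (Θ F : MvPolynomial (Fin n) ℂ) : MvPolynomial (Fin n) ℂ :=
  apolarAlgHom n Θ F

lemma apolarAlgHom_X (i : Fin n) : apolarAlgHom n (X i) = derOp n i := by
  classical
  have hX : (X i : MvPolynomial (Fin n) ℂ)
      = AddMonoidAlgebra.single (Finsupp.single i 1) (1 : ℂ) := rfl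
  rw [hX]
  rw [show apolarAlgHom n (AddMonoidAlgebra.single (Finsupp.single i 1) (1:ℂ))
      = (1:ℂ) • diffMonoidHom n (Multiplicative.ofAdd (Finsupp.single i 1)) from
    AddMonoidAlgebra.lift_single _ _ _]
  rw [one_smul]
  rw [diffMonoidHom]
  change piDiffHom n ((AddMonoidHom.toMultiplicative
    (Finsupp.coeFnAddHom : (Fin n →₀ ℕ) →+ (Fin n → ℕ)))
    (Multiplicative.ofAdd (Finsupp.single i 1))) = derOp n i
  have harg : (AddMonoidHom.toMultiplicative
        (Finsupp.coeFnAddHom : (Fin n →₀ ℕ) →+ (Fin n → ℕ)))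
        (Multiplicative.ofAdd (Finsupp.single i 1))
      = Pi.mulSingle (M := fun _ : Fin n => Multiplicative ℕ) i (Multiplicative.ofAdd 1) := by
    funext j
    rcases eq_or_ne j i with rfl | hj
    · show Multiplicative.ofAdd ((Finsupp.single j 1 : Fin n →₀ ℕ) j)
        = Pi.mulSingle (M := fun _ : Fin n => Multiplicative ℕ) j (Multiplicative.ofAdd 1) j
      rw [Finsupp.single_eq_same, Pi.mulSingle_eq_same]
    · show Multiplicative.ofAdd ((Finsupp.single i 1 : Fin n →₀ ℕ) j)
        = Pi.mulSingle (M := fun _ : Fin n => Multiplicative ℕ) i (Multiplicative.ofAdd 1) j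
      rw [Finsupp.single_eq_of_ne hj, Pi.mulSingle_eq_of_ne hj]
      exact ofAdd_zero
  refine (congrArg (piDiffHom n) harg).trans ?_
  rw [piDiffHom]
  refine (MonoidHom.noncommPiCoprod_mulSingle
    (ϕ := fun i : Fin n => powersHom _ (derOp n i)) (i := i) (y := Multiplicative.ofAdd 1)).trans ?_
  rfl

/-- Sanity check: the dual variable `α_i` acts on `F` as `∂F/∂x_i`. -/
@[simp] lemma contract_X (i : Fin n) (F : MvPolynomial (Fin n) ℂ) :
    contract (X i) F = pderiv i F := by
  rw [contract, apolarAlgHom_X]; rfl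

/-- The apolar (annihilator) ideal `F^⊥ = {Θ ∈ T : Θ ⌟ F = 0}` of a polynomial `F`. -/
def apolarIdeal (F : MvPolynomial (Fin n) ℂ) : Ideal (MvPolynomial (Fin n) ℂ) where
  carrier := {Θ | contract Θ F = 0}
  zero_mem' := by simp [contract]
  add_mem' := by
    intro a b ha hb
    simp only [Set.mem_setOf_eq, contract, map_add, LinearMap.add_apply] at *
    rw [ha, hb, add_zero]
  smul_mem' := by
    intro c x hx
    simp only [Set.mem_setOf_eq, smul_eq_mul, contract, map_mul, Module.End.mul_apply] at *
    rw [hx, map_zero]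

@[simp] lemma mem_apolarIdeal {Θ F : MvPolynomial (Fin n) ℂ} :
    Θ ∈ apolarIdeal F ↔ contract Θ F = 0 := Iff.rfl

variable (n)

/-- The irrelevant maximal ideal `m = ⟨α_1,…,α_n⟩` of `T`. -/
def irrIdeal : Ideal (MvPolynomial (Fin n) ℂ) :=
  Ideal.span (Set.range X)

variable {n}

/-- The homogeneous ideal `I` has a minimal generator of degree `k`, i.e. `(I/mI)_k ≠ 0`:
there is a homogeneous element of `I` of degree `k` not belonging to `m * I`. -/
def HasMinGenOfDegree (I : Ideal (MvPolynomial (Fin n) ℂ)) (k : ℕ) : Prop :=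
  ∃ Θ, Θ ∈ I ∧ Θ.IsHomogeneous k ∧ Θ ∉ irrIdeal n * I

/-- The homogeneous ideal `I` has at least `r` minimal generators of degree `k`, i.e.
`dim_ℂ (I/mI)_k ≥ r`: there are `r` homogeneous degree-`k` elements of `I` that are
linearly independent modulo `m * I`. -/
def MinGensAtLeast (I : Ideal (MvPolynomial (Fin n) ℂ)) (k r : ℕ) : Prop :=
  ∃ Θ : Fin r → MvPolynomial (Fin n) ℂ,
    (∀ i, Θ i ∈ I ∧ (Θ i).IsHomogeneous k) ∧
    ∀ c : Fin r → ℂ, (∑ i, c i • Θ i) ∈ irrIdeal n * I → ∀ i, c i = 0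

/-- `F` is an `s`-fold direct sum of degree `d`: `F = F_1 + ⋯ + F_s` where the `F_i` are
nonzero degree-`d` forms in independent subspaces `V_i` of the space of linear forms with
`V = V_1 ⊕ ⋯ ⊕ V_s` (i.e. in disjoint sets of variables, up to linear change of variables;
`F_i ∈ S^d V_i` is expressed as membership in the subalgebra generated by `V_i`). -/
def IsSFoldDirectSum (F : MvPolynomial (Fin n) ℂ) (d s : ℕ) : Prop :=
  ∃ (V : Fin s → Submodule ℂ (MvPolynomial (Fin n) ℂ))
    (G : Fin s → MvPolynomial (Fin n) ℂ),
    (∀ i, V i ≤ homogeneousSubmodule (Fin n) ℂ 1) ∧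
    iSupIndep V ∧
    (⨆ i, V i) = homogeneousSubmodule (Fin n) ℂ 1 ∧
    (∀ i, G i ≠ 0 ∧ (G i).IsHomogeneous d ∧ G i ∈ Algebra.adjoin ℂ (V i : Set _)) ∧
    F = ∑ i, G i

/-- `F` is a direct sum: `F = F₁ + F₂` with `F₁ ∈ S^d V₁`, `F₂ ∈ S^d V₂` nonzero and
`V = V₁ ⊕ V₂`. -/
def IsDirectSum (F : MvPolynomial (Fin n) ℂ) (d : ℕ) : Prop :=
  IsSFoldDirectSum F d 2

/-- `F` is a limit (as `t → 0`) of `s`-fold direct sums of degree `d`. -/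
def IsLimitOfSFoldDirectSums (F : MvPolynomial (Fin n) ℂ) (d s : ℕ) : Prop :=
  ∃ G : ℂ → MvPolynomial (Fin n) ℂ,
    (∀ t : ℂ, t ≠ 0 → IsSFoldDirectSum (G t) d s) ∧
    ∀ m : Fin n →₀ ℕ,
      Filter.Tendsto (fun t => MvPolynomial.coeff m (G t))
        (nhdsWithin (0 : ℂ) {(0 : ℂ)}ᶜ) (nhds (MvPolynomial.coeff m F))

/-- `F` is a limit of direct sums. -/
def IsLimitOfDirectSums (F : MvPolynomial (Fin n) ℂ) (d : ℕ) : Prop :=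
  IsLimitOfSFoldDirectSums F d 2

/-- `F` is concise: `(F^⊥)_1 = 0`, i.e. `F` cannot be written using fewer variables. -/
def Concise (F : MvPolynomial (Fin n) ℂ) : Prop :=
  ∀ Θ : MvPolynomial (Fin n) ℂ, Θ.IsHomogeneous 1 → contract Θ F = 0 → Θ = 0

end Apolarity

/-- The apolar ideal `W^⊥ = ⋂_{F ∈ W} F^⊥` of a linear series `W`. -/
noncomputable def seriesApolarIdeal {n : ℕ} (W : Submodule ℂ (MvPolynomial (Fin n) ℂ)) :
    Ideal (MvPolynomial (Fin n) ℂ) :=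
  ⨅ F ∈ W, apolarIdeal F


section AuxLemmas

open Finsupp

variable {n : ℕ}

lemma contract_mul' (a b F : MvPolynomial (Fin n) ℂ) :
    contract (a * b) F = contract a (contract b F) := by
  simp only [contract, map_mul, Module.End.mul_apply]

lemma contract_one' (F : MvPolynomial (Fin n) ℂ) : contract 1 F = F := by
  simp only [contract, map_one, Module.End.one_apply]

lemma contract_smul_left (c : ℂ) (a F : MvPolynomial (Fin n) ℂ) :
    contract (c • a) F = c • contract a F := by
  simp only [contract, map_smul, LinearMap.smul_apply]

lemma contract_add_left (a b F : MvPolynomial (Fin n) ℂ) :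
    contract (a + b) F = contract a F + contract b F := by
  simp only [contract, map_add, LinearMap.add_apply]

lemma contract_sum_left {ι : Type*} (s : Finset ι) (a : ι → MvPolynomial (Fin n) ℂ)
    (F : MvPolynomial (Fin n) ℂ) :
    contract (∑ i ∈ s, a i) F = ∑ i ∈ s, contract (a i) F := by
  simp only [contract, map_sum, LinearMap.sum_apply]

lemma contract_zero_left (F : MvPolynomial (Fin n) ℂ) : contract 0 F = 0 := by
  simp only [contract, map_zero, LinearMap.zero_apply]

lemma contract_sum_right {ι : Type*} (Θ : MvPolynomial (Fin n) ℂ) (s : Finset ι)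
    (F : ι → MvPolynomial (Fin n) ℂ) :
    contract Θ (∑ i ∈ s, F i) = ∑ i ∈ s, contract Θ (F i) := by
  simp only [contract, map_sum]

lemma degree_eq_sum_univ (m : Fin n →₀ ℕ) : m.degree = ∑ i : Fin n, m i :=
  Finset.sum_subset (Finset.subset_univ _) (fun i _ hi => Finsupp.notMem_support_iff.mp hi)

lemma contract_X_pow_monomial (a : Fin n) (b : ℕ) (v : Fin n →₀ ℕ) (c : ℂ) :
    contract ((X a : MvPolynomial (Fin n) ℂ) ^ b) (monomial v c)
      = monomial (v - Finsupp.single a b) (c * ((v a).descFactorial b : ℂ)) := by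
  induction b with
  | zero => simp [contract_one']
  | succ b ih =>
    rw [pow_succ', contract_mul', ih, contract_X, pderiv_monomial]
    rw [Finsupp.tsub_apply, Finsupp.single_eq_same]
    have h1 : v - Finsupp.single a b - Finsupp.single a 1 = v - Finsupp.single a (b + 1) := by
      rw [tsub_tsub, ← Finsupp.single_add]
    rw [h1]
    congr 1
    rw [Nat.descFactorial_succ]
    push_cast
    ring

lemma contract_monomial_monomial (m u : Fin n →₀ ℕ) (c : ℂ) :
    contract (monomial m (1 : ℂ)) (monomial u c)
      = monomial (u - m) (c * m.prod fun i k => ((u i).descFactorial k : ℂ)) := by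
  induction m using Finsupp.induction with
  | zero => simp [contract_one']
  | single_add a b f ha hb ih =>
    have hmono : (monomial (Finsupp.single a b + f) (1 : ℂ) : MvPolynomial (Fin n) ℂ)
        = X a ^ b * monomial f 1 := by
      rw [X_pow_eq_monomial, monomial_mul, one_mul]
    rw [hmono, contract_mul', ih, contract_X_pow_monomial]
    have hfa : f a = 0 := Finsupp.notMem_support_iff.mp ha
    have h1 : (u - f) a = u a := by rw [Finsupp.tsub_apply, hfa, Nat.sub_zero]
    have h2 : u - f - Finsupp.single a b = u - (Finsupp.single a b + f) := by
      rw [tsub_tsub, add_comm]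
    have h3 : (Finsupp.single a b + f).prod (fun i k => ((u i).descFactorial k : ℂ))
        = ((u a).descFactorial b : ℂ) * f.prod (fun i k => ((u i).descFactorial k : ℂ)) := by
      rw [Finsupp.prod_add_index_of_disjoint, Finsupp.prod_single_index]
      · simp
      · rw [Finsupp.support_single_ne_zero a hb]
        simpa using ha
    rw [h1, h2, h3]
    congr 1
    ring

/-- The product of factorials of the exponents, as a complex number. -/
def ffac (m : Fin n →₀ ℕ) : ℂ := m.prod fun _ k => (k.factorial : ℂ)

lemma ffac_ne_zero (m : Fin n →₀ ℕ) : ffac m ≠ 0 := by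
  rw [ffac, Finsupp.prod]
  refine Finset.prod_ne_zero_iff.mpr fun i _ => ?_
  exact Nat.cast_ne_zero.mpr (Nat.factorial_ne_zero _)

lemma degree_of_mem_support {F : MvPolynomial (Fin n) ℂ} {e : ℕ} (hF : F.IsHomogeneous e)
    {u : Fin n →₀ ℕ} (hu : u ∈ F.support) : u.degree = e := by
  have := hF (MvPolynomial.mem_support_iff.mp hu)
  rwa [degree_eq_weight_one]

lemma eq_of_le_of_degree_le {m u : Fin n →₀ ℕ} (h : m ≤ u) (hd : u.degree ≤ m.degree) :
    u = m := by
  have hpt := Finsupp.le_def.mp h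
  rw [degree_eq_sum_univ, degree_eq_sum_univ] at hd
  ext i
  by_contra hne
  have hlt : m i < u i := lt_of_le_of_ne (hpt i) (fun h => hne h.symm)
  have : ∑ j : Fin n, m j < ∑ j : Fin n, u j :=
    Finset.sum_lt_sum (fun j _ => hpt j) ⟨i, Finset.mem_univ i, hlt⟩
  omega

lemma exists_lt_of_not_le {m u : Fin n →₀ ℕ} (h : ¬ m ≤ u) : ∃ i, u i < m i := by
  by_contra hc
  push_neg at hc
  exact h (Finsupp.le_def.mpr fun i => hc i)

lemma prod_descFactorial_eq_zero {m u : Fin n →₀ ℕ} (h : ¬ m ≤ u) :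
    (m.prod fun i k => ((u i).descFactorial k : ℂ)) = 0 := by
  obtain ⟨i, hi⟩ := exists_lt_of_not_le h
  have him : i ∈ m.support := Finsupp.mem_support_iff.mpr (by omega)
  rw [Finsupp.prod]
  refine Finset.prod_eq_zero him ?_
  rw [Nat.cast_eq_zero, Nat.descFactorial_eq_zero_iff_lt]
  exact hi

lemma contract_monomial_of_isHomogeneous {F : MvPolynomial (Fin n) ℂ} {e : ℕ}
    (hF : F.IsHomogeneous e) (m : Fin n →₀ ℕ) (hm : e ≤ m.degree) :
    contract (monomial m 1) F = C (ffac m * coeff m F) := by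
  conv_lhs => rw [F.as_sum, contract_sum_right]
  simp only [contract_monomial_monomial]
  rw [Finset.sum_eq_single m]
  · rw [tsub_self]
    by_cases hms : m ≤ m
    · have : (m.prod fun i k => ((m i).descFactorial k : ℂ)) = ffac m := by
        rw [ffac]
        exact Finsupp.prod_congr fun i hi => by rw [Nat.descFactorial_self]
      rw [this, monomial_zero', mul_comm]
    · exact absurd le_rfl hms
  · intro u hu hne
    have hdu : u.degree = e := degree_of_mem_support hF hu
    have hnle : ¬ m ≤ u := by
      intro hle
      exact hne (eq_of_le_of_degree_le hle (by omega))
    rw [prod_descFactorial_eq_zero hnle, mul_zero, monomial_zero]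
  · intro hns
    rw [MvPolynomial.notMem_support_iff.mp hns, zero_mul, monomial_zero]

lemma contract_isHomogeneous {Θ F : MvPolynomial (Fin n) ℂ} {a b : ℕ}
    (hΘ : Θ.IsHomogeneous a) (hF : F.IsHomogeneous b) :
    (contract Θ F).IsHomogeneous (b - a) := by
  rw [← mem_homogeneousSubmodule, Θ.as_sum, contract_sum_left]
  refine Submodule.sum_mem _ fun u hu => ?_
  rw [F.as_sum, contract_sum_right]
  refine Submodule.sum_mem _ fun v hv => ?_
  have hmono : (monomial u (coeff u Θ) : MvPolynomial (Fin n) ℂ)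
      = coeff u Θ • monomial u 1 := by rw [smul_monomial, smul_eq_mul, mul_one]
  rw [hmono, contract_smul_left]
  refine Submodule.smul_mem _ _ ?_
  rw [contract_monomial_monomial, mem_homogeneousSubmodule]
  by_cases hle : u ≤ v
  · refine isHomogeneous_monomial _ ?_
    have hv' : v.degree = b := degree_of_mem_support hF hv
    have hu' : u.degree = a := degree_of_mem_support hΘ hu
    have : (v - u) + u = v := tsub_add_cancel_of_le hle
    have hdeg : (v - u).degree + u.degree = v.degree := by
      rw [degree_eq_sum_univ, degree_eq_sum_univ, degree_eq_sum_univ, ← Finset.sum_add_distrib]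
      exact Finset.sum_congr rfl fun i _ => by
        have := congrArg (fun w => w i) this
        simpa using this
    omega
  · rw [prod_descFactorial_eq_zero hle, mul_zero, monomial_zero]
    exact isHomogeneous_zero _ _ _

lemma degree_one_eq_single {u : Fin n →₀ ℕ} (h : u.degree = 1) :
    ∃ i, u = Finsupp.single i 1 := by
  have hne : u ≠ 0 := by
    intro h0
    rw [h0, map_zero] at h
    omega
  obtain ⟨i, hi⟩ := Finsupp.support_nonempty_iff.mpr hne
  have hui : u i ≠ 0 := Finsupp.mem_support_iff.mp hi
  have hle : u i ≤ u.degree := Finsupp.le_degree i u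
  refine ⟨i, ?_⟩
  ext j
  rcases eq_or_ne j i with rfl | hji
  · rw [Finsupp.single_eq_same]; omega
  · rw [Finsupp.single_eq_of_ne hji]
    by_contra huj
    have hj : j ∈ u.support := Finsupp.mem_support_iff.mpr huj
    have hsub : ({i, j} : Finset (Fin n)) ⊆ u.support := by
      intro x hx
      simp only [Finset.mem_insert, Finset.mem_singleton] at hx
      rcases hx with rfl | rfl <;> assumption
    have : u i + u j ≤ u.degree := by
      rw [Finsupp.degree]
      calc u i + u j = ∑ x ∈ ({i, j} : Finset (Fin n)), u x := by
            rw [Finset.sum_pair (Ne.symm hji)]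
        _ ≤ ∑ x ∈ u.support, u x := Finset.sum_le_sum_of_subset hsub
    omega

lemma isHomogeneous_one_mem_irrIdeal {ℓ : MvPolynomial (Fin n) ℂ}
    (hl : ℓ.IsHomogeneous 1) : ℓ ∈ irrIdeal n := by
  rw [irrIdeal]
  nth_rewrite 1 [ℓ.as_sum]
  refine Submodule.sum_mem _ fun u hu => ?_
  obtain ⟨i, rfl⟩ := degree_one_eq_single (degree_of_mem_support hl hu)
  have hXi : (monomial (Finsupp.single i 1) (coeff (Finsupp.single i 1) ℓ) :
      MvPolynomial (Fin n) ℂ) = C (coeff (Finsupp.single i 1) ℓ) * X i := by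
    rw [← smul_eq_C_mul, ← pow_one (X i : MvPolynomial (Fin n) ℂ), X_pow_eq_monomial,
      smul_monomial, smul_eq_mul, mul_one]
  rw [hXi]
  exact Ideal.mul_mem_left _ _ (Ideal.subset_span ⟨i, rfl⟩)

lemma contract_eq_zero_of_mem {W : Submodule ℂ (MvPolynomial (Fin n) ℂ)}
    {b F : MvPolynomial (Fin n) ℂ} (hb : b ∈ seriesApolarIdeal W) (hF : F ∈ W) :
    contract b F = 0 := by
  rw [seriesApolarIdeal] at hb
  exact Ideal.mem_iInf.mp (Ideal.mem_iInf.mp hb F) hF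

lemma mem_seriesApolarIdeal {W : Submodule ℂ (MvPolynomial (Fin n) ℂ)}
    {b : MvPolynomial (Fin n) ℂ} (h : ∀ F ∈ W, contract b F = 0) :
    b ∈ seriesApolarIdeal W := by
  rw [seriesApolarIdeal]
  exact Ideal.mem_iInf.mpr fun F => Ideal.mem_iInf.mpr fun hF => h F hF

lemma mem_finsuppAntidiag_iff_degree {k : ℕ} {u : Fin n →₀ ℕ} :
    u ∈ Finset.finsuppAntidiag (Finset.univ : Finset (Fin n)) k ↔ u.degree = k := by
  rw [Finset.mem_finsuppAntidiag']
  constructor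
  · rintro ⟨h, -⟩
    simpa [Finsupp.degree_apply, Finsupp.sum] using h
  · intro h
    exact ⟨by simpa [Finsupp.degree_apply, Finsupp.sum] using h, Finset.subset_univ _⟩

/-- The degree-`k` form representing the ℂ-linear functional `f` via the apolarity pairing. -/
noncomputable def dualForm (k : ℕ) (f : Module.Dual ℂ (MvPolynomial (Fin n) ℂ)) : MvPolynomial (Fin n) ℂ :=
  ∑ m ∈ Finset.finsuppAntidiag (Finset.univ : Finset (Fin n)) k,
    monomial m (f (monomial m 1) / ffac m)

lemma dualForm_isHomogeneous (k : ℕ) (f : Module.Dual ℂ (MvPolynomial (Fin n) ℂ)) :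
    (dualForm k f).IsHomogeneous k := by
  rw [← mem_homogeneousSubmodule, dualForm]
  refine Submodule.sum_mem _ fun m hm => ?_
  rw [mem_homogeneousSubmodule]
  exact isHomogeneous_monomial _ (mem_finsuppAntidiag_iff_degree.mp hm)

lemma coeff_dualForm (k : ℕ) (f : Module.Dual ℂ (MvPolynomial (Fin n) ℂ))
    {u : Fin n →₀ ℕ} (hu : u.degree = k) :
    coeff u (dualForm k f) = f (monomial u 1) / ffac u := by
  rw [dualForm, coeff_sum]
  simp only [coeff_monomial]
  rw [Finset.sum_ite_eq', if_pos (mem_finsuppAntidiag_iff_degree.mpr hu)]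

lemma contract_dualForm {k : ℕ} {f : Module.Dual ℂ (MvPolynomial (Fin n) ℂ)}
    {Θ' : MvPolynomial (Fin n) ℂ} (h : Θ'.IsHomogeneous k) :
    contract Θ' (dualForm k f) = C (f Θ') := by
  conv_lhs => rw [Θ'.as_sum, contract_sum_left]
  have hterm : ∀ u ∈ Θ'.support,
      contract (monomial u (coeff u Θ')) (dualForm k f)
        = C (f (monomial u (coeff u Θ'))) := by
    intro u hu
    have hd : u.degree = k := degree_of_mem_support h hu
    have h1 : (monomial u (coeff u Θ') : MvPolynomial (Fin n) ℂ)
        = coeff u Θ' • monomial u 1 := by rw [smul_monomial, smul_eq_mul, mul_one]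
    rw [h1, contract_smul_left,
      contract_monomial_of_isHomogeneous (dualForm_isHomogeneous k f) u (le_of_eq hd.symm),
      coeff_dualForm k f hd, map_smul f, smul_eq_mul]
    have h2 : ffac u * (f (monomial u 1) / ffac u) = f (monomial u 1) := by
      rw [mul_comm, div_mul_cancel₀ _ (ffac_ne_zero u)]
    rw [h2, smul_eq_C_mul, ← C_mul]
  rw [Finset.sum_congr rfl hterm, ← map_sum C _ _, ← map_sum f _ _, ← Θ'.as_sum]

lemma contract_dualForm_right {k : ℕ} (g : Module.Dual ℂ (MvPolynomial (Fin n) ℂ))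
    {F' : MvPolynomial (Fin n) ℂ} (h : F'.IsHomogeneous k) :
    contract (dualForm k g) F' = C (g F') := by
  have hsub : F'.support ⊆ Finset.finsuppAntidiag (Finset.univ : Finset (Fin n)) k :=
    fun u hu => mem_finsuppAntidiag_iff_degree.mpr (degree_of_mem_support h hu)
  have hF' : F' = ∑ u ∈ Finset.finsuppAntidiag (Finset.univ : Finset (Fin n)) k,
      monomial u (coeff u F') := by
    conv_lhs => rw [F'.as_sum]
    exact Finset.sum_subset hsub fun u _ hnu => by
      rw [MvPolynomial.notMem_support_iff.mp hnu, monomial_zero]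
  rw [dualForm, contract_sum_left]
  have hterm : ∀ u ∈ Finset.finsuppAntidiag (Finset.univ : Finset (Fin n)) k,
      contract (monomial u (g (monomial u 1) / ffac u)) F'
        = C (g (monomial u (coeff u F'))) := by
    intro u hu
    have hd : u.degree = k := mem_finsuppAntidiag_iff_degree.mp hu
    have h1 : (monomial u (g (monomial u 1) / ffac u) : MvPolynomial (Fin n) ℂ)
        = (g (monomial u 1) / ffac u) • monomial u 1 := by
      rw [smul_monomial, smul_eq_mul, mul_one]
    rw [h1, contract_smul_left,
      contract_monomial_of_isHomogeneous h u (le_of_eq hd.symm)]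
    have h2 : (monomial u (coeff u F') : MvPolynomial (Fin n) ℂ)
        = coeff u F' • monomial u 1 := by rw [smul_monomial, smul_eq_mul, mul_one]
    rw [h2, map_smul g, smul_eq_mul, smul_eq_C_mul, ← C_mul]
    congr 1
    have := ffac_ne_zero u
    field_simp
  rw [Finset.sum_congr rfl hterm, ← map_sum C _ _, ← map_sum g _ _, ← hF']

lemma contract_zero_right (Θ : MvPolynomial (Fin n) ℂ) : contract Θ 0 = 0 :=
  map_zero (apolarAlgHom n Θ)

end AuxLemmas

set_option maxHeartbeats 1000000 in
set_option synthInstance.maxHeartbeats 1000000 in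
/-- For a linear series `W ⊆ S^d V`, the apolar ideal `W^⊥` has a
minimal generator of degree `d + 1` iff the first prolongation of `W` is nonzero: there is
a nonzero form `G` of degree `d + 1` with `T₁ ⌟ G ⊆ W`. -/
theorem linear_series_generator_degree_succ_iff_prolongation
    (n d : ℕ) (W : Submodule ℂ (MvPolynomial (Fin n) ℂ))
    (hW : W ≤ homogeneousSubmodule (Fin n) ℂ d) :
    HasMinGenOfDegree (seriesApolarIdeal W) (d + 1) ↔
    ∃ G : MvPolynomial (Fin n) ℂ, G ≠ 0 ∧ G.IsHomogeneous (d + 1) ∧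
      ∀ ℓ : MvPolynomial (Fin n) ℂ, ℓ.IsHomogeneous 1 → contract ℓ G ∈ W := by
  constructor
  · rintro ⟨Θs, hΘI, hΘhom, hΘnm⟩
    have hΘnm' : Θs ∉ Submodule.restrictScalars ℂ
        ((irrIdeal n * seriesApolarIdeal W : Ideal _) : Submodule _ _) := by
      exact hΘnm
    obtain ⟨f, hfΘ, hfmap⟩ := Submodule.exists_dual_map_eq_bot_of_notMem hΘnm' inferInstance
    have hfzero : ∀ x ∈ (irrIdeal n * seriesApolarIdeal W : Ideal _), f x = 0 := by
      intro x hx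
      have hmem : f x ∈ (Submodule.restrictScalars ℂ
          ((irrIdeal n * seriesApolarIdeal W : Ideal _) : Submodule _ _)).map f :=
        Submodule.mem_map_of_mem (by exact hx)
      rw [hfmap] at hmem
      simpa using hmem
    set G := dualForm (d + 1) f with hGdef
    have hGhom := dualForm_isHomogeneous (d + 1) f
    have hkey : ∀ Θ' : MvPolynomial (Fin n) ℂ, Θ'.IsHomogeneous (d + 1) →
        contract Θ' G = C (f Θ') := fun Θ' h => contract_dualForm h
    have hG0 : G ≠ 0 := by
      intro h0
      have h1 := hkey Θs hΘhom
      rw [h0, contract_zero_right] at h1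
      exact hfΘ (C_injective _ _ (by rw [← h1, map_zero]))
    refine ⟨G, hG0, hGhom, ?_⟩
    intro ℓ hℓ
    by_contra hFW
    have hFhom : (contract ℓ G).IsHomogeneous d := by
      have h1 := contract_isHomogeneous hℓ hGhom
      rwa [Nat.add_sub_cancel] at h1
    obtain ⟨g, hgF, hgmap⟩ := Submodule.exists_dual_map_eq_bot_of_notMem hFW inferInstance
    have hgzero : ∀ x ∈ W, g x = 0 := by
      intro x hx
      have hmem : g x ∈ W.map g := Submodule.mem_map_of_mem hx
      rw [hgmap] at hmem
      simpa using hmem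
    set Θg := dualForm d g with hΘgdef
    have hΘghom := dualForm_isHomogeneous d g
    have hΘgI : Θg ∈ seriesApolarIdeal W := by
      refine mem_seriesApolarIdeal fun F hF => ?_
      have hFh : F.IsHomogeneous d := hW hF
      rw [contract_dualForm_right g hFh, hgzero F hF, map_zero]
    have hmul : ℓ * Θg ∈ (irrIdeal n * seriesApolarIdeal W : Ideal _) :=
      Ideal.mul_mem_mul (isHomogeneous_one_mem_irrIdeal hℓ) hΘgI
    have hmulhom : (ℓ * Θg).IsHomogeneous (d + 1) := by
      have h1 := hℓ.mul hΘghom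
      rwa [add_comm] at h1
    have h1 : contract (ℓ * Θg) G = C (f (ℓ * Θg)) := hkey _ hmulhom
    rw [hfzero _ hmul, map_zero, mul_comm, contract_mul',
      contract_dualForm_right g hFhom] at h1
    exact hgF (C_injective _ _ (by rw [h1, map_zero]))
  · rintro ⟨G, hG0, hGhom, hGW⟩
    obtain ⟨m₀, hm₀⟩ := MvPolynomial.support_nonempty.mpr hG0
    have hm₀deg : m₀.degree = d + 1 := degree_of_mem_support hGhom hm₀
    refine ⟨monomial m₀ 1, ?_, isHomogeneous_monomial _ hm₀deg, ?_⟩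
    · refine mem_seriesApolarIdeal fun F hF => ?_
      have hFh : F.IsHomogeneous d := hW hF
      rw [contract_monomial_of_isHomogeneous hFh m₀ (by rw [hm₀deg]; omega),
        hFh.coeff_eq_zero (show m₀.degree ≠ d by rw [hm₀deg]; omega), mul_zero, map_zero]
    · intro hmem
      have hzero : contract (monomial m₀ 1) G = 0 := by
        refine Submodule.mul_induction_on hmem ?_ ?_
        · intro a ha b hb
          have ha' : a ∈ Submodule.span (MvPolynomial (Fin n) ℂ) (Set.range X) := by
            rw [irrIdeal] at ha
            exact ha
          refine Submodule.span_induction (p := fun x _ => contract (x * b) G = 0)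
            ?_ ?_ ?_ ?_ ha'
          · rintro x ⟨i, rfl⟩
            show contract (X i * b) G = 0
            rw [mul_comm, contract_mul']
            exact contract_eq_zero_of_mem hb (hGW (X i) (isHomogeneous_X _ _))
          · show contract (0 * b) G = 0
            rw [zero_mul, contract_zero_left]
          · intro x y hx hy h1 h2
            show contract ((x + y) * b) G = 0
            rw [add_mul, contract_add_left, h1, h2, add_zero]
          · intro r x hx h1
            show contract ((r • x) * b) G = 0
            rw [smul_eq_mul, mul_assoc, contract_mul', h1, contract_zero_right]
        · intro x y hx hy
          rw [contract_add_left, hx, hy, add_zero]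
      rw [contract_monomial_of_isHomogeneous hGhom m₀ (le_of_eq hm₀deg.symm)] at hzero
      have hc0 : ffac m₀ * coeff m₀ G = 0 := C_injective _ _ (by rw [hzero, map_zero])
      exact mul_ne_zero (ffac_ne_zero m₀) (MvPolynomial.mem_support_iff.mp hm₀) hc0
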